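/- Let B_1, …, B_n be finitely many closed disks in ℝ² (closed balls B(a_i; ρ_i) with ρ_i ≥ 0). Then there exists a finite family of pairwise disjoint closed disks B(c_1; σ_1), …, B(c_m; σ_m) in ℝ² such that every disk B(a_i; ρ_i) of the original family is contained in some disk B(c_j; σ_j) of the new family, and the sum of the radii is conserved: σ_1 + ⋯ + σ_m = ρ_1 + ⋯ + ρ_n. -/

import Mathlib

open Metric

variable {E : Type*} [NormedAddCommGroup E] [NormedSpace ℝ E]

/-- Two intersecting closed balls are contained in a single ball with radius the sum. -/
lemma merge_ball (a₁ a₂ : E) (ρ₁ ρ₂ : ℝ) (h₁ : 0 ≤ ρ₁) (h₂ : 0 ≤ ρ₂)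
    (h : ¬ Disjoint (closedBall a₁ ρ₁) (closedBall a₂ ρ₂)) :
    ∃ c : E, closedBall a₁ ρ₁ ⊆ closedBall c (ρ₁ + ρ₂) ∧
      closedBall a₂ ρ₂ ⊆ closedBall c (ρ₁ + ρ₂) := by
  obtain ⟨x, hx₁, hx₂⟩ := Set.not_disjoint_iff.mp h
  rw [mem_closedBall] at hx₁ hx₂
  have hd : dist a₁ a₂ ≤ ρ₁ + ρ₂ := by
    calc dist a₁ a₂ ≤ dist a₁ x + dist x a₂ := dist_triangle _ _ _
    _ ≤ ρ₁ + ρ₂ := by rw [dist_comm a₁ x]; linarith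
  set s := ρ₁ + ρ₂ with hs_def
  by_cases hs : s = 0
  · have hρ1 : ρ₁ = 0 := by linarith [h₁, h₂, hs_def ▸ hs]
    have hρ2 : ρ₂ = 0 := by linarith
    have ha : a₂ = a₁ := by
      have : dist a₁ a₂ ≤ 0 := by rw [hs] at hd; exact hd
      exact (dist_le_zero.mp this).symm
    refine ⟨a₁, ?_, ?_⟩
    · exact closedBall_subset_closedBall (by linarith)
    · rw [ha]; exact closedBall_subset_closedBall (by linarith)
  · have hspos : 0 < s := lt_of_le_of_ne (by positivity) (Ne.symm hs)
    refine ⟨a₁ + (ρ₂ / s) • (a₂ - a₁), ?_, ?_⟩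
    · apply closedBall_subset_closedBall'
      have : dist a₁ (a₁ + (ρ₂ / s) • (a₂ - a₁)) = (ρ₂ / s) * ‖a₂ - a₁‖ := by
        rw [dist_eq_norm]
        have : a₁ - (a₁ + (ρ₂ / s) • (a₂ - a₁)) = -((ρ₂ / s) • (a₂ - a₁)) := by abel
        rw [this, norm_neg, norm_smul, Real.norm_eq_abs,
          abs_of_nonneg (by positivity)]
      rw [this]
      have hnorm : ‖a₂ - a₁‖ ≤ s := by rw [← dist_eq_norm, dist_comm]; exact hd
      have : (ρ₂ / s) * ‖a₂ - a₁‖ ≤ (ρ₂ / s) * s := by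
        apply mul_le_mul_of_nonneg_left hnorm (by positivity)
      rw [div_mul_cancel₀ _ hs] at this
      linarith
    · apply closedBall_subset_closedBall'
      have key : a₂ - (a₁ + (ρ₂ / s) • (a₂ - a₁)) = (ρ₁ / s) • (a₂ - a₁) := by
        have h1 : (1 : ℝ) - ρ₂ / s = ρ₁ / s := by
          rw [eq_div_iff hs, sub_mul, one_mul, div_mul_cancel₀ _ hs]
          simp only [hs_def]; ring
        calc a₂ - (a₁ + (ρ₂ / s) • (a₂ - a₁))
            = (a₂ - a₁) - (ρ₂ / s) • (a₂ - a₁) := by abel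
          _ = (1 : ℝ) • (a₂ - a₁) - (ρ₂ / s) • (a₂ - a₁) := by rw [one_smul]
          _ = ((1 : ℝ) - ρ₂ / s) • (a₂ - a₁) := by rw [sub_smul]
          _ = (ρ₁ / s) • (a₂ - a₁) := by rw [h1]
      have : dist a₂ (a₁ + (ρ₂ / s) • (a₂ - a₁)) = (ρ₁ / s) * ‖a₂ - a₁‖ := by
        rw [dist_eq_norm, key, norm_smul, Real.norm_eq_abs,
          abs_of_nonneg (by positivity)]
      rw [this]
      have hnorm : ‖a₂ - a₁‖ ≤ s := by rw [← dist_eq_norm, dist_comm]; exact hd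
      have : (ρ₁ / s) * ‖a₂ - a₁‖ ≤ (ρ₁ / s) * s := by
        apply mul_le_mul_of_nonneg_left hnorm (by positivity)
      rw [div_mul_cancel₀ _ hs] at this
      linarith

/-- The disjointness relation on (center, radius) pairs. -/
def BallRel (p q : E × ℝ) : Prop := Disjoint (closedBall p.1 p.2) (closedBall q.1 q.2)

omit [NormedSpace ℝ E] in
lemma ballRel_symm : ∀ {p q : E × ℝ}, BallRel p q → BallRel q p :=
  fun h => Disjoint.symm h

/-- Insertion lemma: insert a ball into a pairwise disjoint family, preserving the
sum of radii and covering everything. -/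
lemma insert_ball : ∀ (N : ℕ) (t : List (E × ℝ)), t.length ≤ N →
    (∀ p ∈ t, 0 ≤ p.2) → t.Pairwise BallRel → ∀ (p : E × ℝ), 0 ≤ p.2 →
    ∃ t' : List (E × ℝ), (∀ q ∈ t', 0 ≤ q.2) ∧ t'.Pairwise BallRel ∧
      (∀ q ∈ t, ∃ q' ∈ t', closedBall q.1 q.2 ⊆ closedBall q'.1 q'.2) ∧
      (∃ q' ∈ t', closedBall p.1 p.2 ⊆ closedBall q'.1 q'.2) ∧
      (t'.map Prod.snd).sum = p.2 + (t.map Prod.snd).sum := by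
  letI : DecidableEq (E × ℝ) := Classical.decEq _
  letI : BEq (E × ℝ) := instBEqOfDecidableEq
  haveI : LawfulBEq (E × ℝ) := instLawfulBEq
  intro N
  induction N with
  | zero =>
    intro t ht _ _ p hp
    have : t = [] := List.length_eq_zero_iff.mp (Nat.le_zero.mp ht)
    subst this
    exact ⟨[p], by simpa using hp, List.pairwise_singleton _ _,
      by simp, ⟨p, by simp⟩, by simp⟩
  | succ N ih =>
    intro t ht hnn hdisj p hp
    rcases Classical.em (∀ q ∈ t, BallRel p q) with hall | hall
    · refine ⟨p :: t, ?_, ?_, ?_, ⟨p, by simp⟩, by simp⟩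
      · intro q hq
        rcases List.mem_cons.mp hq with h | h
        · exact h ▸ hp
        · exact hnn q h
      · exact List.pairwise_cons.mpr ⟨hall, hdisj⟩
      · intro q hq; exact ⟨q, List.mem_cons_of_mem _ hq, subset_rfl⟩
    · push_neg at hall
      obtain ⟨q, hq, hnd⟩ := hall
      obtain ⟨c, hc₁, hc₂⟩ := merge_ball p.1 q.1 p.2 q.2 hp (hnn q hq) hnd
      set p' : E × ℝ := (c, p.2 + q.2) with hp'
      have hperm : t.Perm (q :: t.erase q) := List.perm_cons_erase hq
      have herase_len : (t.erase q).length ≤ N := by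
        have := t.length_erase_of_mem hq
        omega
      have herase_nn : ∀ r ∈ t.erase q, 0 ≤ r.2 :=
        fun r hr => hnn r ((t.erase_sublist).mem hr)
      have herase_disj : (t.erase q).Pairwise BallRel :=
        hdisj.sublist (t.erase_sublist)
      have hp'_nn : 0 ≤ p'.2 := add_nonneg hp (hnn q hq)
      obtain ⟨t', ht'nn, ht'disj, ht'cov, ⟨q', hq't', hq'sub⟩, ht'sum⟩ :=
        ih (t.erase q) herase_len herase_nn herase_disj p' hp'_nn
      refine ⟨t', ht'nn, ht'disj, ?_, ⟨q', hq't', hc₁.trans hq'sub⟩, ?_⟩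
      · intro r hr
        by_cases hrq : r = q
        · exact ⟨q', hq't', hrq ▸ (hc₂.trans hq'sub)⟩
        · exact ht'cov r (List.mem_erase_of_ne hrq |>.mpr hr)
      · have hsum_t : (t.map Prod.snd).sum = q.2 + ((t.erase q).map Prod.snd).sum := by
          have := (hperm.map Prod.snd).sum_eq
          simpa using this
        rw [ht'sum, hsum_t]
        simp [hp']
        ring

/-- Main list-level lemma. -/
lemma merge_list : ∀ (l : List (E × ℝ)), (∀ p ∈ l, 0 ≤ p.2) →
    ∃ t : List (E × ℝ), (∀ q ∈ t, 0 ≤ q.2) ∧ t.Pairwise BallRel ∧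
      (∀ p ∈ l, ∃ q ∈ t, closedBall p.1 p.2 ⊆ closedBall q.1 q.2) ∧
      (t.map Prod.snd).sum = (l.map Prod.snd).sum := by
  intro l
  induction l with
  | nil => intro _; exact ⟨[], by simp, List.Pairwise.nil, by simp, by simp⟩
  | cons p l ih =>
    intro hnn
    obtain ⟨t, htnn, htdisj, htcov, htsum⟩ := ih (fun q hq => hnn q (List.mem_cons_of_mem _ hq))
    obtain ⟨t', ht'nn, ht'disj, ht'cov, ⟨q', hq't', hq'sub⟩, ht'sum⟩ :=
      insert_ball t.length t le_rfl htnn htdisj p (hnn p List.mem_cons_self)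
    refine ⟨t', ht'nn, ht'disj, ?_, ?_⟩
    · intro r hr
      rcases List.mem_cons.mp hr with h | h
      · exact ⟨q', hq't', h ▸ hq'sub⟩
      · obtain ⟨s, hs, hsub⟩ := htcov r h
        obtain ⟨s', hs', hsub'⟩ := ht'cov s hs
        exact ⟨s', hs', hsub.trans hsub'⟩
    · rw [ht'sum, htsum]; simp

/-- The merging disks lemma (Lemma 4.4 of the paper): any finite family of closed disks
in the plane can be replaced by a finite family of pairwise disjoint closed disks
covering the original ones and with the same sum of radii. -/
theorem merging_disks (n : ℕ) (a : Fin n → EuclideanSpace ℝ (Fin 2)) (ρ : Fin n → ℝ)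
    (hρ : ∀ i, 0 ≤ ρ i) :
    ∃ (m : ℕ) (c : Fin m → EuclideanSpace ℝ (Fin 2)) (σ : Fin m → ℝ),
      (∀ j, 0 ≤ σ j) ∧
      (∀ j j', j ≠ j' → Disjoint (closedBall (c j) (σ j)) (closedBall (c j') (σ j'))) ∧
      (∀ i, ∃ j, closedBall (a i) (ρ i) ⊆ closedBall (c j) (σ j)) ∧
      (∑ j, σ j = ∑ i, ρ i) := by
  set l : List (EuclideanSpace ℝ (Fin 2) × ℝ) := List.ofFn (fun i => (a i, ρ i)) with hl
  have hlnn : ∀ p ∈ l, 0 ≤ p.2 := by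
    intro p hp
    obtain ⟨i, hi⟩ := List.mem_ofFn.mp hp
    exact hi ▸ hρ i
  obtain ⟨t, htnn, htdisj, htcov, htsum⟩ := merge_list l hlnn
  refine ⟨t.length, fun j => (t.get j).1, fun j => (t.get j).2, ?_, ?_, ?_, ?_⟩
  · intro j; exact htnn _ (List.get_mem t j)
  · intro j j' hjj'
    rcases lt_or_gt_of_ne hjj' with h | h
    · exact (List.pairwise_iff_get.mp htdisj) j j' h
    · exact ((List.pairwise_iff_get.mp htdisj) j' j h).symm
  · intro i
    have hmem : (a i, ρ i) ∈ l := by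
      rw [hl]; exact List.mem_ofFn.mpr ⟨i, rfl⟩
    obtain ⟨q, hq, hsub⟩ := htcov _ hmem
    obtain ⟨j, hj⟩ := List.mem_iff_get.mp hq
    refine ⟨j, ?_⟩
    show closedBall (a i) (ρ i) ⊆ closedBall (t.get j).1 (t.get j).2
    rw [hj]; exact hsub
  · have h1 : (t.map Prod.snd).sum = ∑ j : Fin t.length, (t.get j).2 := by
      conv_lhs => rw [← List.ofFn_get t]
      rw [List.map_ofFn, List.sum_ofFn]
      rfl
    have h2 : (l.map Prod.snd).sum = ∑ i, ρ i := by
      rw [hl, List.map_ofFn, List.sum_ofFn]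
      rfl
    rw [← h1, ← h2, htsum]
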